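/- For every integer k ≥ 3 and every integer n ≥ 2^{15k²} that is a multiple of 2k, there exist an integer m with m ≥ 3n/4 and a simple graph G on m vertices with no clique of size k+1 such that every set of ⌈n/(2k)⌉ vertices of G contains a clique of size k. -/

import Mathlib

open Finset
open scoped Classical

section Counting

variable {ι α : Type*} [Fintype ι] [DecidableEq ι] [Fintype α] [DecidableEq α]

/-- Counting functions with prescribed values on a set of coordinates. -/
lemma card_filter_eqOn_le (S : Finset ι) (v : ι → α) :
    (Finset.univ.filter fun f : ι → α => ∀ i ∈ S, f i = v i).card ≤
      Fintype.card α ^ (Fintype.card ι - S.card) := by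
  classical
  have hcard : (Finset.univ : Finset ((Sᶜ : Finset ι) → α)).card =
      Fintype.card α ^ (Fintype.card ι - S.card) := by
    rw [Finset.card_univ, Fintype.card_fun]
    congr 1
    rw [Fintype.card_coe, Finset.card_compl]
  rw [← hcard]
  apply Finset.card_le_card_of_injOn (fun f => fun x : (Sᶜ : Finset ι) => f x)
  · intro f _; exact Finset.mem_univ _
  · intro f hf g hg hfg
    simp only [Finset.mem_coe, Finset.mem_filter] at hf hg
    funext i
    by_cases hi : i ∈ S
    · rw [hf.2 i hi, hg.2 i hi]
    · exact congrFun hfg ⟨i, by simpa using hi⟩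

lemma card_filter_fix2_le {i j : ι} (hij : i ≠ j) (a b : α) :
    (Finset.univ.filter fun f : ι → α => f i = a ∧ f j = b).card ≤
      Fintype.card α ^ (Fintype.card ι - 2) := by
  classical
  have h2 : ({i, j} : Finset ι).card = 2 := by
    rw [Finset.card_insert_of_notMem (by simpa using hij), Finset.card_singleton]
  calc (Finset.univ.filter fun f : ι → α => f i = a ∧ f j = b).card
      ≤ (Finset.univ.filter fun f : ι → α =>
          ∀ x ∈ ({i, j} : Finset ι), f x = (fun x => if x = i then a else b) x).card := by
        apply Finset.card_le_card
        intro f hf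
        simp only [Finset.mem_filter, Finset.mem_univ, true_and] at hf ⊢
        intro x hx
        rcases Finset.mem_insert.1 hx with rfl | hx
        · simp [hf.1]
        · rcases Finset.mem_singleton.1 hx with rfl
          simp [hij.symm, hf.2]
    _ ≤ _ := by rw [← h2]; exact card_filter_eqOn_le _ _

lemma card_filter_fix3_le {i j l : ι} (hij : i ≠ j) (hil : i ≠ l) (hjl : j ≠ l) (a b c : α) :
    (Finset.univ.filter fun f : ι → α => f i = a ∧ f j = b ∧ f l = c).card ≤
      Fintype.card α ^ (Fintype.card ι - 3) := by
  classical
  have h3 : ({i, j, l} : Finset ι).card = 3 := by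
    rw [Finset.card_insert_of_notMem (by simp [hij, hil]),
      Finset.card_insert_of_notMem (by simpa using hjl), Finset.card_singleton]
  calc (Finset.univ.filter fun f : ι → α => f i = a ∧ f j = b ∧ f l = c).card
      ≤ (Finset.univ.filter fun f : ι → α =>
          ∀ x ∈ ({i, j, l} : Finset ι), f x =
            (fun x => if x = i then a else if x = j then b else c) x).card := by
        apply Finset.card_le_card
        intro f hf
        simp only [Finset.mem_filter, Finset.mem_univ, true_and] at hf ⊢
        intro x hx
        rcases Finset.mem_insert.1 hx with rfl | hx
        · simp [hf.1]
        · rcases Finset.mem_insert.1 hx with rfl | hx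
          · simp [hij.symm, hf.2.1]
          · rcases Finset.mem_singleton.1 hx with rfl
            simp [hil.symm, hjl.symm, hf.2.2]
    _ ≤ _ := by rw [← h3]; exact card_filter_eqOn_le _ _

lemma card_filter_fix1_le (i : ι) (a : α) :
    (Finset.univ.filter fun f : ι → α => f i = a).card ≤
      Fintype.card α ^ (Fintype.card ι - 1) := by
  classical
  have h1 : ({i} : Finset ι).card = 1 := Finset.card_singleton i
  calc (Finset.univ.filter fun f : ι → α => f i = a).card
      ≤ (Finset.univ.filter fun f : ι → α =>
          ∀ x ∈ ({i} : Finset ι), f x = (fun _ => a) x).card := by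
        apply Finset.card_le_card
        intro f hf
        simp only [Finset.mem_filter, Finset.mem_univ, true_and] at hf ⊢
        intro x hx
        rcases Finset.mem_singleton.1 hx with rfl
        exact hf
    _ ≤ _ := by rw [← h1]; exact card_filter_eqOn_le _ _

/-- event defined coordinatewise -/
lemma card_filter_forall (F : Finset α) [DecidablePred fun f : ι → α => ∀ i, f i ∈ F] :
    (Finset.univ.filter fun f : ι → α => ∀ i, f i ∈ F).card = F.card ^ Fintype.card ι := by
  have : (Finset.univ.filter fun f : ι → α => ∀ i, f i ∈ F) =
      Fintype.piFinset (fun _ => F) := by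
    ext f; simp [Fintype.mem_piFinset]
  rw [this, Fintype.card_piFinset]
  simp [Finset.prod_const]

lemma card_offDiag_le : (Finset.univ : Finset ι).offDiag.card ≤ Fintype.card ι ^ 2 := by
  calc (Finset.univ : Finset ι).offDiag.card
      ≤ ((Finset.univ : Finset ι) ×ˢ Finset.univ).card :=
        Finset.card_le_card (fun x hx => Finset.mem_product.2
          ⟨(Finset.mem_offDiag.1 hx).1, (Finset.mem_offDiag.1 hx).2.1⟩)
    _ = Fintype.card ι ^ 2 := by simp [sq]

end Counting

section Defs
variable {k n : ℕ}

def rng (f : Fin k → Fin n) : Finset (Fin n) := Finset.image f Finset.univ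

lemma mem_rng {f : Fin k → Fin n} {x : Fin n} : x ∈ rng f ↔ ∃ p, f p = x := by
  simp [rng]

def BadPair (f g : Fin k → Fin n) : Prop :=
  ∃ x y : Fin n, x ≠ y ∧ x ∈ rng f ∧ x ∈ rng g ∧ y ∈ rng f ∧ y ∈ rng g

def BadTri (f g h : Fin k → Fin n) : Prop :=
  ∃ x y z : Fin n, x ≠ y ∧ x ≠ z ∧ y ≠ z ∧ x ∈ rng f ∧ x ∈ rng g ∧
    y ∈ rng g ∧ y ∈ rng h ∧ z ∈ rng f ∧ z ∈ rng h

open scoped Classical in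
noncomputable def Bset {e : ℕ} (ω : Fin e → Fin k → Fin n) : Finset (Fin e) :=
  Finset.univ.filter (fun i => ¬Function.Injective (ω i) ∨
    (∃ j, j ≠ i ∧ BadPair (ω i) (ω j)) ∨
    (∃ j l, i ≠ j ∧ i ≠ l ∧ j ≠ l ∧ BadTri (ω i) (ω j) (ω l)))

end Defs

section Counts
variable {k n : ℕ} (hk : 2 ≤ k)

lemma count_rng2 {x y : Fin n} (hxy : x ≠ y) :
    (Finset.univ.filter fun f : Fin k → Fin n => x ∈ rng f ∧ y ∈ rng f).card ≤
      k ^ 2 * n ^ (k - 2) := by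
  classical
  have hsub : (Finset.univ.filter fun f : Fin k → Fin n => x ∈ rng f ∧ y ∈ rng f) ⊆
      (Finset.univ.offDiag).biUnion
        (fun pq : Fin k × Fin k => Finset.univ.filter fun f => f pq.1 = x ∧ f pq.2 = y) := by
    intro f hf
    simp only [Finset.mem_filter, Finset.mem_univ, true_and, mem_rng] at hf
    obtain ⟨⟨p, hp⟩, ⟨q, hq⟩⟩ := hf
    have hpq : p ≠ q := by rintro rfl; exact hxy (hp ▸ hq ▸ rfl)
    refine Finset.mem_biUnion.2 ⟨(p, q),
      Finset.mem_offDiag.2 ⟨Finset.mem_univ _, Finset.mem_univ _, hpq⟩, ?_⟩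
    simp [hp, hq]
  calc _ ≤ _ := Finset.card_le_card hsub
    _ ≤ ∑ pq ∈ Finset.univ.offDiag, (Finset.univ.filter
          fun f : Fin k → Fin n => f pq.1 = x ∧ f pq.2 = y).card := Finset.card_biUnion_le
    _ ≤ ∑ _pq ∈ (Finset.univ : Finset (Fin k)).offDiag, n ^ (k - 2) := by
        apply Finset.sum_le_sum
        rintro ⟨p, q⟩ hpq
        have hpq' : p ≠ q := (Finset.mem_offDiag.1 hpq).2.2
        simpa using card_filter_fix2_le (α := Fin n) hpq' x y
    _ ≤ k ^ 2 * n ^ (k - 2) := by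
        rw [Finset.sum_const, smul_eq_mul]
        exact Nat.mul_le_mul_right _ (by simpa using card_offDiag_le (ι := Fin k))

lemma count_noninj :
    (Finset.univ.filter fun f : Fin k → Fin n => ¬Function.Injective f).card ≤
      k ^ 2 * (n * n ^ (k - 2)) := by
  classical
  have hsub : (Finset.univ.filter fun f : Fin k → Fin n => ¬Function.Injective f) ⊆
      ((Finset.univ.offDiag (α := Fin k)) ×ˢ (Finset.univ : Finset (Fin n))).biUnion
        (fun t => Finset.univ.filter fun f => f t.1.1 = t.2 ∧ f t.1.2 = t.2) := by
    intro f hf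
    simp only [Finset.mem_filter, Finset.mem_univ, true_and] at hf
    rw [Function.not_injective_iff] at hf
    obtain ⟨p, q, hval, hpq⟩ := hf
    refine Finset.mem_biUnion.2 ⟨((p, q), f q), ?_, ?_⟩
    · exact Finset.mem_product.2 ⟨Finset.mem_offDiag.2 ⟨Finset.mem_univ _, Finset.mem_univ _, hpq⟩,
        Finset.mem_univ _⟩
    · simp [hval]
  calc _ ≤ _ := Finset.card_le_card hsub
    _ ≤ ∑ t ∈ (Finset.univ.offDiag (α := Fin k)) ×ˢ (Finset.univ : Finset (Fin n)),
          (Finset.univ.filter fun f : Fin k → Fin n => f t.1.1 = t.2 ∧ f t.1.2 = t.2).card :=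
        Finset.card_biUnion_le
    _ ≤ ∑ _t ∈ (Finset.univ.offDiag (α := Fin k)) ×ˢ (Finset.univ : Finset (Fin n)),
          n ^ (k - 2) := by
        apply Finset.sum_le_sum
        rintro ⟨⟨p, q⟩, x⟩ ht
        have hpq : p ≠ q := (Finset.mem_offDiag.1 (Finset.mem_product.1 ht).1).2.2
        simpa using card_filter_fix2_le (α := Fin n) hpq x x
    _ ≤ k ^ 2 * (n * n ^ (k - 2)) := by
        rw [Finset.sum_const, smul_eq_mul, Finset.card_product]
        simp only [Finset.card_univ, Fintype.card_fin]
        calc (Finset.univ.offDiag (α := Fin k)).card * n * n ^ (k - 2)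
            ≤ k ^ 2 * n * n ^ (k - 2) :=
              Nat.mul_le_mul_right _ (Nat.mul_le_mul_right _
                (by simpa using card_offDiag_le (ι := Fin k)))
          _ = k ^ 2 * (n * n ^ (k - 2)) := by ring

lemma count_badpair :
    (((Finset.univ : Finset (Fin k → Fin n)) ×ˢ Finset.univ).filter
        fun fg : (Fin k → Fin n) × (Fin k → Fin n) => BadPair fg.1 fg.2).card ≤
      n ^ 2 * (k ^ 2 * n ^ (k - 2)) ^ 2 := by
  classical
  have hsub : (((Finset.univ : Finset (Fin k → Fin n)) ×ˢ Finset.univ).filter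
        fun fg : (Fin k → Fin n) × (Fin k → Fin n) => BadPair fg.1 fg.2) ⊆
      (Finset.univ.offDiag (α := Fin n)).biUnion (fun xy =>
        (Finset.univ.filter fun f : Fin k → Fin n => xy.1 ∈ rng f ∧ xy.2 ∈ rng f) ×ˢ
        (Finset.univ.filter fun g : Fin k → Fin n => xy.1 ∈ rng g ∧ xy.2 ∈ rng g)) := by
    rintro ⟨f, g⟩ hfg
    simp only [Finset.mem_filter] at hfg
    obtain ⟨x, y, hxy, h1, h2, h3, h4⟩ := hfg.2
    refine Finset.mem_biUnion.2 ⟨(x, y),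
      Finset.mem_offDiag.2 ⟨Finset.mem_univ _, Finset.mem_univ _, hxy⟩, ?_⟩
    simp only [Finset.mem_product, Finset.mem_filter, Finset.mem_univ, true_and]
    exact ⟨⟨h1, h3⟩, ⟨h2, h4⟩⟩
  calc _ ≤ _ := Finset.card_le_card hsub
    _ ≤ ∑ xy ∈ Finset.univ.offDiag (α := Fin n),
          ((Finset.univ.filter fun f : Fin k → Fin n => xy.1 ∈ rng f ∧ xy.2 ∈ rng f) ×ˢ
           (Finset.univ.filter fun g : Fin k → Fin n =>
              xy.1 ∈ rng g ∧ xy.2 ∈ rng g)).card := Finset.card_biUnion_le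
    _ ≤ ∑ _xy ∈ Finset.univ.offDiag (α := Fin n), (k ^ 2 * n ^ (k - 2)) ^ 2 := by
        apply Finset.sum_le_sum
        rintro ⟨x, y⟩ hxy
        have hxy' : x ≠ y := (Finset.mem_offDiag.1 hxy).2.2
        rw [Finset.card_product, sq]
        exact Nat.mul_le_mul (count_rng2 hxy') (count_rng2 hxy')
    _ ≤ n ^ 2 * (k ^ 2 * n ^ (k - 2)) ^ 2 := by
        rw [Finset.sum_const, smul_eq_mul]
        exact Nat.mul_le_mul_right _ (by simpa using card_offDiag_le (ι := Fin n))

lemma count_badtri :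
    (((Finset.univ : Finset ((Fin k → Fin n) × (Fin k → Fin n) × (Fin k → Fin n)))).filter
        fun t : (Fin k → Fin n) × (Fin k → Fin n) × (Fin k → Fin n) => BadTri t.1 t.2.1 t.2.2).card ≤
      n ^ 3 * (k ^ 2 * n ^ (k - 2)) ^ 3 := by
  classical
  set T3 : Finset (Fin n × Fin n × Fin n) :=
    Finset.univ.filter (fun xyz => xyz.1 ≠ xyz.2.1 ∧ xyz.1 ≠ xyz.2.2 ∧ xyz.2.1 ≠ xyz.2.2) with hT3
  have hsub : ((Finset.univ : Finset ((Fin k → Fin n) × (Fin k → Fin n) × (Fin k → Fin n))).filter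
        fun t : (Fin k → Fin n) × (Fin k → Fin n) × (Fin k → Fin n) => BadTri t.1 t.2.1 t.2.2) ⊆
      T3.biUnion (fun xyz =>
        (Finset.univ.filter fun f : Fin k → Fin n => xyz.1 ∈ rng f ∧ xyz.2.2 ∈ rng f) ×ˢ
        (Finset.univ.filter fun g : Fin k → Fin n => xyz.1 ∈ rng g ∧ xyz.2.1 ∈ rng g) ×ˢ
        (Finset.univ.filter fun h : Fin k → Fin n => xyz.2.1 ∈ rng h ∧ xyz.2.2 ∈ rng h)) := by
    rintro ⟨f, g, h⟩ hfgh
    simp only [Finset.mem_filter] at hfgh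
    obtain ⟨x, y, z, hxy, hxz, hyz, h1, h2, h3, h4, h5, h6⟩ := hfgh.2
    refine Finset.mem_biUnion.2 ⟨(x, y, z), ?_, ?_⟩
    · simp only [hT3, Finset.mem_filter, Finset.mem_univ, true_and]
      exact ⟨hxy, hxz, hyz⟩
    · simp only [Finset.mem_product, Finset.mem_filter, Finset.mem_univ, true_and]
      exact ⟨⟨h1, h5⟩, ⟨h2, h3⟩, ⟨h4, h6⟩⟩
  calc _ ≤ _ := Finset.card_le_card hsub
    _ ≤ ∑ xyz ∈ T3,
        ((Finset.univ.filter fun f : Fin k → Fin n => xyz.1 ∈ rng f ∧ xyz.2.2 ∈ rng f) ×ˢ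
        (Finset.univ.filter fun g : Fin k → Fin n => xyz.1 ∈ rng g ∧ xyz.2.1 ∈ rng g) ×ˢ
        (Finset.univ.filter fun h : Fin k → Fin n =>
          xyz.2.1 ∈ rng h ∧ xyz.2.2 ∈ rng h)).card := Finset.card_biUnion_le
    _ ≤ ∑ _xyz ∈ T3, (k ^ 2 * n ^ (k - 2)) ^ 3 := by
        apply Finset.sum_le_sum
        rintro ⟨x, y, z⟩ hmem
        simp only [hT3, Finset.mem_filter, Finset.mem_univ, true_and] at hmem
        obtain ⟨hxy, hxz, hyz⟩ := hmem
        rw [Finset.card_product, Finset.card_product]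
        calc _ ≤ (k ^ 2 * n ^ (k - 2)) * ((k ^ 2 * n ^ (k - 2)) * (k ^ 2 * n ^ (k - 2))) :=
              Nat.mul_le_mul (count_rng2 hxz)
                (Nat.mul_le_mul (count_rng2 hxy) (count_rng2 hyz))
          _ = (k ^ 2 * n ^ (k - 2)) ^ 3 := by ring
    _ ≤ n ^ 3 * (k ^ 2 * n ^ (k - 2)) ^ 3 := by
        rw [Finset.sum_const, smul_eq_mul]
        apply Nat.mul_le_mul_right
        calc T3.card ≤ (Finset.univ : Finset (Fin n × Fin n × Fin n)).card :=
              Finset.card_le_card (Finset.filter_subset _ _)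
          _ ≤ n ^ 3 := by simp [Finset.card_univ]; ring_nf; exact Nat.le_refl _

end Counts

section OmegaCounts
variable {k n e : ℕ}

lemma sum_card_filter_comm {β γ : Type*} [Fintype γ] [DecidableEq γ] (A : Finset β)
    (P : β → γ → Prop) [∀ ω, DecidablePred (fun a => P a ω)]
    [∀ a, DecidablePred (fun ω => P a ω)] :
    ∑ ω : γ, (A.filter fun a => P a ω).card =
      ∑ a ∈ A, (Finset.univ.filter fun ω => P a ω).card := by
  simp only [Finset.card_filter]
  exact Finset.sum_comm

lemma card_fun_eq : Fintype.card (Fin k → Fin n) = n ^ k := by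
  simp

lemma count_omega_noninj (i : Fin e) :
    (Finset.univ.filter fun ω : Fin e → Fin k → Fin n => ¬Function.Injective (ω i)).card ≤
      (k ^ 2 * (n * n ^ (k - 2))) * (n ^ k) ^ (e - 1) := by
  classical
  have hsub : (Finset.univ.filter fun ω : Fin e → Fin k → Fin n => ¬Function.Injective (ω i)) ⊆
      (Finset.univ.filter fun f : Fin k → Fin n => ¬Function.Injective f).biUnion
        (fun f => Finset.univ.filter fun ω : Fin e → Fin k → Fin n => ω i = f) := by
    intro ω hω
    simp only [Finset.mem_filter, Finset.mem_univ, true_and] at hω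
    exact Finset.mem_biUnion.2 ⟨ω i, by simp [hω], by simp⟩
  calc _ ≤ _ := Finset.card_le_card hsub
    _ ≤ ∑ f ∈ Finset.univ.filter fun f : Fin k → Fin n => ¬Function.Injective f,
          (Finset.univ.filter fun ω : Fin e → Fin k → Fin n => ω i = f).card :=
        Finset.card_biUnion_le
    _ ≤ ∑ _f ∈ Finset.univ.filter fun f : Fin k → Fin n => ¬Function.Injective f,
          (n ^ k) ^ (e - 1) := by
        apply Finset.sum_le_sum
        intro f _
        have := card_filter_fix1_le (α := Fin k → Fin n) i f
        simpa [card_fun_eq] using this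
    _ ≤ (k ^ 2 * (n * n ^ (k - 2))) * (n ^ k) ^ (e - 1) := by
        rw [Finset.sum_const, smul_eq_mul]
        exact Nat.mul_le_mul_right _ count_noninj

lemma count_omega_pair {i j : Fin e} (hij : i ≠ j) :
    (Finset.univ.filter fun ω : Fin e → Fin k → Fin n => BadPair (ω i) (ω j)).card ≤
      (n ^ 2 * (k ^ 2 * n ^ (k - 2)) ^ 2) * (n ^ k) ^ (e - 2) := by
  classical
  have hsub : (Finset.univ.filter fun ω : Fin e → Fin k → Fin n => BadPair (ω i) (ω j)) ⊆
      (((Finset.univ : Finset (Fin k → Fin n)) ×ˢ Finset.univ).filter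
          (fun fg : (Fin k → Fin n) × (Fin k → Fin n) => BadPair fg.1 fg.2)).biUnion
        (fun fg => Finset.univ.filter fun ω : Fin e → Fin k → Fin n =>
          ω i = fg.1 ∧ ω j = fg.2) := by
    intro ω hω
    simp only [Finset.mem_filter, Finset.mem_univ, true_and] at hω
    exact Finset.mem_biUnion.2 ⟨(ω i, ω j), by simp [hω], by simp⟩
  calc _ ≤ _ := Finset.card_le_card hsub
    _ ≤ ∑ fg ∈ ((Finset.univ : Finset (Fin k → Fin n)) ×ˢ Finset.univ).filter
          (fun fg : (Fin k → Fin n) × (Fin k → Fin n) => BadPair fg.1 fg.2),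
          (Finset.univ.filter fun ω : Fin e → Fin k → Fin n =>
            ω i = fg.1 ∧ ω j = fg.2).card := Finset.card_biUnion_le
    _ ≤ ∑ _fg ∈ ((Finset.univ : Finset (Fin k → Fin n)) ×ˢ Finset.univ).filter
          (fun fg : (Fin k → Fin n) × (Fin k → Fin n) => BadPair fg.1 fg.2),
          (n ^ k) ^ (e - 2) := by
        apply Finset.sum_le_sum
        rintro ⟨f, g⟩ _
        have := card_filter_fix2_le (α := Fin k → Fin n) hij f g
        simpa [card_fun_eq] using this
    _ ≤ (n ^ 2 * (k ^ 2 * n ^ (k - 2)) ^ 2) * (n ^ k) ^ (e - 2) := by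
        rw [Finset.sum_const, smul_eq_mul]
        exact Nat.mul_le_mul_right _ count_badpair

lemma count_omega_tri {i j l : Fin e} (hij : i ≠ j) (hil : i ≠ l) (hjl : j ≠ l) :
    (Finset.univ.filter fun ω : Fin e → Fin k → Fin n =>
        BadTri (ω i) (ω j) (ω l)).card ≤
      (n ^ 3 * (k ^ 2 * n ^ (k - 2)) ^ 3) * (n ^ k) ^ (e - 3) := by
  classical
  have hsub : (Finset.univ.filter fun ω : Fin e → Fin k → Fin n => BadTri (ω i) (ω j) (ω l)) ⊆
      (((Finset.univ : Finset ((Fin k → Fin n) × (Fin k → Fin n) × (Fin k → Fin n)))).filter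
          (fun t : (Fin k → Fin n) × (Fin k → Fin n) × (Fin k → Fin n) =>
            BadTri t.1 t.2.1 t.2.2)).biUnion
        (fun t => Finset.univ.filter fun ω : Fin e → Fin k → Fin n =>
          ω i = t.1 ∧ ω j = t.2.1 ∧ ω l = t.2.2) := by
    intro ω hω
    simp only [Finset.mem_filter, Finset.mem_univ, true_and] at hω
    exact Finset.mem_biUnion.2 ⟨(ω i, ω j, ω l), by simp [hω], by simp⟩
  calc _ ≤ _ := Finset.card_le_card hsub
    _ ≤ ∑ t ∈ ((Finset.univ : Finset ((Fin k → Fin n) × (Fin k → Fin n) × (Fin k → Fin n)))).filter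
          (fun t : (Fin k → Fin n) × (Fin k → Fin n) × (Fin k → Fin n) =>
            BadTri t.1 t.2.1 t.2.2),
          (Finset.univ.filter fun ω : Fin e → Fin k → Fin n =>
            ω i = t.1 ∧ ω j = t.2.1 ∧ ω l = t.2.2).card := Finset.card_biUnion_le
    _ ≤ ∑ _t ∈ ((Finset.univ : Finset ((Fin k → Fin n) × (Fin k → Fin n) × (Fin k → Fin n)))).filter
          (fun t : (Fin k → Fin n) × (Fin k → Fin n) × (Fin k → Fin n) =>
            BadTri t.1 t.2.1 t.2.2),
          (n ^ k) ^ (e - 3) := by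
        apply Finset.sum_le_sum
        rintro ⟨f, g, h⟩ _
        have := card_filter_fix3_le (α := Fin k → Fin n) hij hil hjl f g h
        simpa [card_fun_eq] using this
    _ ≤ (n ^ 3 * (k ^ 2 * n ^ (k - 2)) ^ 3) * (n ^ k) ^ (e - 3) := by
        rw [Finset.sum_const, smul_eq_mul]
        exact Nat.mul_le_mul_right _ count_badtri

end OmegaCounts

section SumB
variable {k n e : ℕ}

lemma Bset_card_le (ω : Fin e → Fin k → Fin n) :
    (Bset ω).card ≤
      (Finset.univ.filter fun i : Fin e => ¬Function.Injective (ω i)).card +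
      (Finset.univ.offDiag.filter fun p : Fin e × Fin e => BadPair (ω p.1) (ω p.2)).card +
      ((Finset.univ.filter fun t : Fin e × Fin e × Fin e =>
          t.1 ≠ t.2.1 ∧ t.1 ≠ t.2.2 ∧ t.2.1 ≠ t.2.2).filter
        fun t => BadTri (ω t.1) (ω t.2.1) (ω t.2.2)).card := by
  classical
  have hsub : Bset ω ⊆
      (Finset.univ.filter fun i : Fin e => ¬Function.Injective (ω i)) ∪
      ((Finset.univ.offDiag.filter fun p : Fin e × Fin e =>
        BadPair (ω p.1) (ω p.2)).image Prod.fst) ∪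
      (((Finset.univ.filter fun t : Fin e × Fin e × Fin e =>
          t.1 ≠ t.2.1 ∧ t.1 ≠ t.2.2 ∧ t.2.1 ≠ t.2.2).filter
        fun t => BadTri (ω t.1) (ω t.2.1) (ω t.2.2)).image Prod.fst) := by
    intro i hi
    simp only [Bset, Finset.mem_filter, Finset.mem_univ, true_and] at hi
    rcases hi with h | ⟨j, hji, hbp⟩ | ⟨j, l, hij, hil, hjl, hbt⟩
    · exact Finset.mem_union.2 (Or.inl (Finset.mem_union.2 (Or.inl (by simp [h]))))
    · refine Finset.mem_union.2 (Or.inl (Finset.mem_union.2 (Or.inr ?_)))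
      refine Finset.mem_image.2 ⟨(i, j), ?_, rfl⟩
      exact Finset.mem_filter.2 ⟨Finset.mem_offDiag.2
        ⟨Finset.mem_univ _, Finset.mem_univ _, fun h => hji h.symm⟩, hbp⟩
    · refine Finset.mem_union.2 (Or.inr ?_)
      refine Finset.mem_image.2 ⟨(i, j, l), ?_, rfl⟩
      simp only [Finset.mem_filter, Finset.mem_univ, true_and]
      exact ⟨⟨hij, hil, hjl⟩, hbt⟩
  calc (Bset ω).card ≤ _ := Finset.card_le_card hsub
    _ ≤ _ := by
      refine (Finset.card_union_le _ _).trans ?_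
      gcongr
      · refine (Finset.card_union_le _ _).trans ?_
        gcongr
        exact Finset.card_image_le
      · exact Finset.card_image_le

lemma sum_Bset_card_le :
    ∑ ω : Fin e → Fin k → Fin n, (Bset ω).card ≤
      e * ((k ^ 2 * (n * n ^ (k - 2))) * (n ^ k) ^ (e - 1)) +
      e ^ 2 * ((n ^ 2 * (k ^ 2 * n ^ (k - 2)) ^ 2) * (n ^ k) ^ (e - 2)) +
      e ^ 3 * ((n ^ 3 * (k ^ 2 * n ^ (k - 2)) ^ 3) * (n ^ k) ^ (e - 3)) := by
  classical
  have h1 : ∑ ω : Fin e → Fin k → Fin n,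
      (Finset.univ.filter fun i : Fin e => ¬Function.Injective (ω i)).card ≤
      e * ((k ^ 2 * (n * n ^ (k - 2))) * (n ^ k) ^ (e - 1)) := by
    rw [sum_card_filter_comm (γ := Fin e → Fin k → Fin n) Finset.univ (fun (i : Fin e) (ω : Fin e → Fin k → Fin n) => ¬Function.Injective (ω i))]
    calc _ ≤ ∑ _i ∈ (Finset.univ : Finset (Fin e)),
          (k ^ 2 * (n * n ^ (k - 2))) * (n ^ k) ^ (e - 1) :=
          Finset.sum_le_sum fun i _ => count_omega_noninj i
      _ = _ := by simp [Finset.sum_const]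
  have h2 : ∑ ω : Fin e → Fin k → Fin n,
      (Finset.univ.offDiag.filter fun p : Fin e × Fin e => BadPair (ω p.1) (ω p.2)).card ≤
      e ^ 2 * ((n ^ 2 * (k ^ 2 * n ^ (k - 2)) ^ 2) * (n ^ k) ^ (e - 2)) := by
    rw [sum_card_filter_comm (γ := Fin e → Fin k → Fin n) Finset.univ.offDiag (fun (p : Fin e × Fin e) (ω : Fin e → Fin k → Fin n) => BadPair (ω p.1) (ω p.2))]
    calc _ ≤ ∑ _p ∈ (Finset.univ : Finset (Fin e)).offDiag,
          (n ^ 2 * (k ^ 2 * n ^ (k - 2)) ^ 2) * (n ^ k) ^ (e - 2) := by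
          apply Finset.sum_le_sum
          rintro ⟨i, j⟩ hp
          exact count_omega_pair (Finset.mem_offDiag.1 hp).2.2
      _ ≤ _ := by
          rw [Finset.sum_const, smul_eq_mul]
          exact Nat.mul_le_mul_right _ (by simpa using card_offDiag_le (ι := Fin e))
  have h3 : ∑ ω : Fin e → Fin k → Fin n,
      ((Finset.univ.filter fun t : Fin e × Fin e × Fin e =>
          t.1 ≠ t.2.1 ∧ t.1 ≠ t.2.2 ∧ t.2.1 ≠ t.2.2).filter
        fun t => BadTri (ω t.1) (ω t.2.1) (ω t.2.2)).card ≤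
      e ^ 3 * ((n ^ 3 * (k ^ 2 * n ^ (k - 2)) ^ 3) * (n ^ k) ^ (e - 3)) := by
    rw [sum_card_filter_comm (γ := Fin e → Fin k → Fin n) _
      (fun (t : Fin e × Fin e × Fin e) (ω : Fin e → Fin k → Fin n) =>
        BadTri (ω t.1) (ω t.2.1) (ω t.2.2))]
    calc _ ≤ ∑ _t ∈ (Finset.univ.filter fun t : Fin e × Fin e × Fin e =>
          t.1 ≠ t.2.1 ∧ t.1 ≠ t.2.2 ∧ t.2.1 ≠ t.2.2),
          (n ^ 3 * (k ^ 2 * n ^ (k - 2)) ^ 3) * (n ^ k) ^ (e - 3) := by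
          apply Finset.sum_le_sum
          rintro ⟨i, j, l⟩ ht
          simp only [Finset.mem_filter, Finset.mem_univ, true_and] at ht
          exact count_omega_tri ht.1 ht.2.1 ht.2.2
      _ ≤ _ := by
          rw [Finset.sum_const, smul_eq_mul]
          apply Nat.mul_le_mul_right
          calc (Finset.univ.filter fun t : Fin e × Fin e × Fin e =>
              t.1 ≠ t.2.1 ∧ t.1 ≠ t.2.2 ∧ t.2.1 ≠ t.2.2).card
              ≤ (Finset.univ : Finset (Fin e × Fin e × Fin e)).card :=
                Finset.card_le_card (Finset.filter_subset _ _)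
            _ ≤ e ^ 3 := by simp [Finset.card_univ]; ring_nf; exact Nat.le_refl _
  calc ∑ ω : Fin e → Fin k → Fin n, (Bset ω).card ≤ _ :=
        Finset.sum_le_sum fun ω _ => Bset_card_le ω
    _ ≤ _ := by
        rw [Finset.sum_add_distrib, Finset.sum_add_distrib]
        exact Nat.add_le_add (Nat.add_le_add h1 h2) h3

end SumB

section UnionBound
variable {k n e : ℕ}

lemma choose_le_two_pow' (n r : ℕ) : n.choose r ≤ 2 ^ n := by
  rcases le_or_gt r n with h | h
  · calc n.choose r ≤ ∑ m ∈ Finset.range (n + 1), n.choose m :=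
        Finset.single_le_sum (fun m _ => Nat.zero_le _) (Finset.mem_range.2 (Nat.lt_succ_of_le h))
    _ = 2 ^ n := Nat.sum_range_choose n
  · rw [Nat.choose_eq_zero_of_lt h]; exact Nat.zero_le _

lemma count_good_ge (S : Finset (Fin n)) :
    S.card.descFactorial k ≤
      (Finset.univ.filter fun f : Fin k → Fin n =>
        Function.Injective f ∧ ∀ p, f p ∈ S).card := by
  classical
  have hcard : Fintype.card (Fin k ↪ (↥S : Type)) = S.card.descFactorial k := by
    rw [Fintype.card_embedding_eq, Fintype.card_coe, Fintype.card_fin]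
  rw [← hcard, ← Fintype.card_coe]
  apply Fintype.card_le_of_injective
    (fun E => (⟨fun p => (E.1 p : Fin n), by
      simp only [Finset.mem_coe, Finset.mem_filter, Finset.mem_univ, true_and]
      constructor
      · intro p q hpq
        exact E.injective (Subtype.ext hpq)
      · intro p; exact (E.1 p).2⟩ :
        (Finset.univ.filter fun f : Fin k → Fin n =>
          Function.Injective f ∧ ∀ p, f p ∈ S)))
  intro E F hEF
  have h := congrArg Subtype.val hEF
  simp only at h
  exact DFunLike.ext E F fun p => Subtype.coe_injective (congrFun h p)

lemma count_bad1 (N0 : ℕ) :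
    (Finset.univ.filter fun ω : Fin e → Fin k → Fin n =>
        ∃ S : Finset (Fin n), S.card = N0 ∧
          ∀ i, ¬(Function.Injective (ω i) ∧ ∀ p, ω i p ∈ S)).card ≤
      2 ^ n * (n ^ k - N0.descFactorial k) ^ e := by
  classical
  have hsub : (Finset.univ.filter fun ω : Fin e → Fin k → Fin n =>
        ∃ S : Finset (Fin n), S.card = N0 ∧
          ∀ i, ¬(Function.Injective (ω i) ∧ ∀ p, ω i p ∈ S)) ⊆
      (Finset.univ.powersetCard N0).biUnion (fun S =>
        Finset.univ.filter fun ω : Fin e → Fin k → Fin n =>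
          ∀ i, ¬(Function.Injective (ω i) ∧ ∀ p, ω i p ∈ S)) := by
    intro ω hω
    simp only [Finset.mem_filter, Finset.mem_univ, true_and] at hω
    obtain ⟨S, hScard, hS⟩ := hω
    refine Finset.mem_biUnion.2 ⟨S, ?_, Finset.mem_filter.2 ⟨Finset.mem_univ _, hS⟩⟩
    exact Finset.mem_powersetCard.2 ⟨Finset.subset_univ _, hScard⟩
  calc _ ≤ _ := Finset.card_le_card hsub
    _ ≤ ∑ S ∈ Finset.univ.powersetCard N0,
        (Finset.univ.filter fun ω : Fin e → Fin k → Fin n =>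
          ∀ i, ¬(Function.Injective (ω i) ∧ ∀ p, ω i p ∈ S)).card := Finset.card_biUnion_le
    _ ≤ ∑ _S ∈ (Finset.univ : Finset (Fin n)).powersetCard N0,
        (n ^ k - N0.descFactorial k) ^ e := by
        apply Finset.sum_le_sum
        intro S hS
        have hScard : S.card = N0 := (Finset.mem_powersetCard.1 hS).2
        have heq : (Finset.univ.filter fun ω : Fin e → Fin k → Fin n =>
            ∀ i, ¬(Function.Injective (ω i) ∧ ∀ p, ω i p ∈ S)) =
            (Finset.univ.filter fun ω : Fin e → Fin k → Fin n =>
              ∀ i, ω i ∈ (Finset.univ.filter fun f : Fin k → Fin n =>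
                ¬(Function.Injective f ∧ ∀ p, f p ∈ S))) := by
          apply Finset.filter_congr
          intro ω _
          simp
        rw [heq, card_filter_forall]
        have hFcard : (Finset.univ.filter fun f : Fin k → Fin n =>
            ¬(Function.Injective f ∧ ∀ p, f p ∈ S)).card =
            n ^ k - (Finset.univ.filter fun f : Fin k → Fin n =>
              (Function.Injective f ∧ ∀ p, f p ∈ S)).card := by
          rw [Finset.filter_not, Finset.card_sdiff_of_subset (Finset.filter_subset _ _)]
          congr 1
          rw [Finset.card_univ, card_fun_eq]
        rw [hFcard]
        simp only [Fintype.card_fin]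
        apply Nat.pow_le_pow_left
        apply Nat.sub_le_sub_left
        rw [← hScard]
        exact count_good_ge S
    _ ≤ 2 ^ n * (n ^ k - N0.descFactorial k) ^ e := by
        rw [Finset.sum_const, smul_eq_mul]
        apply Nat.mul_le_mul_right
        rw [Finset.card_powersetCard, Finset.card_univ, Fintype.card_fin]
        exact choose_le_two_pow' n N0

end UnionBound

section Arith

lemma pow_shrink_nat (T LB Q n e : ℕ) (hQ : 2 ≤ Q) (hLBT : LB ≤ T) (hQLB : T ≤ Q * LB)
    (he : e = Q * (n + 3)) : 2 ^ n * (T - LB) ^ e * 8 ≤ T ^ e := by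
  rcases Nat.eq_zero_or_pos T with rfl | hT0
  · have he0 : 0 < e := by rw [he]; exact Nat.mul_pos (by omega) (by omega)
    have hLB0 : LB = 0 := Nat.le_zero.1 hLBT
    subst hLB0
    rw [Nat.sub_zero, zero_pow he0.ne']
    simp
  · have hQ0 : (0:ℝ) < (Q:ℝ) := by positivity
    suffices h : (2:ℝ) ^ n * ((T:ℝ) - (LB:ℝ)) ^ e * 8 ≤ (T:ℝ) ^ e by
      have hcast : ((2 ^ n * (T - LB) ^ e * 8 : ℕ) : ℝ) ≤ ((T ^ e : ℕ) : ℝ) := by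
        push_cast [Nat.cast_sub hLBT]
        exact h
      exact_mod_cast hcast
    set x : ℝ := 1 / Q with hx
    have hx0 : 0 < x := by positivity
    have hxQ : (Q:ℝ) * x = 1 := by rw [hx, mul_one_div_cancel hQ0.ne']
    have hxhalf : x ≤ 1/2 := by
      rw [hx]
      rw [div_le_div_iff₀ hQ0 (by norm_num)]
      have h2Q : (2:ℝ) ≤ (Q:ℝ) := by exact_mod_cast hQ
      nlinarith [h2Q]
    have h1x : 0 ≤ 1 - x := by linarith
    have hhalf : (1 - x) ^ Q ≤ 1 / 2 := by
      have hb : (2:ℝ) ≤ (1 + x) ^ Q := by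
        have := one_add_mul_le_pow (a := x) (by linarith) Q
        calc (2:ℝ) = 1 + (Q:ℝ) * x := by rw [hxQ]; norm_num
          _ ≤ (1 + x) ^ Q := this
      have hab : (1 - x) ^ Q * (1 + x) ^ Q ≤ 1 := by
        rw [← mul_pow]
        have h1 : (1 - x) * (1 + x) = 1 - x ^ 2 := by ring
        rw [h1]
        apply pow_le_one₀ <;> nlinarith [sq_nonneg x]
      have ha : 0 ≤ (1 - x) ^ Q := by positivity
      nlinarith [ha, hb, hab]
    have hTLB : (T:ℝ) - (LB:ℝ) ≤ (T:ℝ) * (1 - x) := by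
      have hLBval : (T:ℝ) / Q ≤ (LB:ℝ) := by
        rw [div_le_iff₀ hQ0]
        calc (T:ℝ) ≤ (Q:ℝ) * (LB:ℝ) := by exact_mod_cast hQLB
          _ = (LB:ℝ) * (Q:ℝ) := by ring
      have : (T:ℝ) * (1 - x) = (T:ℝ) - (T:ℝ) / Q := by
        field_simp [hx]
        linarith [hxQ]
      rw [this]
      linarith
    have hTLB0 : 0 ≤ (T:ℝ) - (LB:ℝ) := by
      have : (LB:ℝ) ≤ (T:ℝ) := by exact_mod_cast hLBT
      linarith
    calc (2:ℝ) ^ n * ((T:ℝ) - (LB:ℝ)) ^ e * 8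
        ≤ (2:ℝ) ^ n * ((T:ℝ) * (1 - x)) ^ e * 8 := by
          gcongr
      _ = (T:ℝ) ^ e * (2 ^ n * 8 * ((1 - x) ^ Q) ^ (n + 3)) := by
          rw [mul_pow, he, pow_mul]
          ring
      _ ≤ (T:ℝ) ^ e * (2 ^ n * 8 * (1 / 2) ^ (n + 3)) := by
          have h0 : (0:ℝ) ≤ (1 - x) ^ Q := by positivity
          gcongr
      _ = (T:ℝ) ^ e * 1 := by
          congr 1
          rw [div_pow, one_pow, pow_add]
          field_simp
          ring
      _ = (T:ℝ) ^ e := by ring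

end Arith

section Exists
variable {k n : ℕ}

lemma exists_good_omega (k n e N0 D : ℕ) (hn0 : 0 < n)
    (hcount : 2 ^ n * (n ^ k - N0.descFactorial k) ^ e * 8 ≤ (n ^ k) ^ e)
    (hsum : 2 * (e * ((k ^ 2 * (n * n ^ (k - 2))) * (n ^ k) ^ (e - 1)) +
      e ^ 2 * ((n ^ 2 * (k ^ 2 * n ^ (k - 2)) ^ 2) * (n ^ k) ^ (e - 2)) +
      e ^ 3 * ((n ^ 3 * (k ^ 2 * n ^ (k - 2)) ^ 3) * (n ^ k) ^ (e - 3))) ≤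
        (D + 1) * (n ^ k) ^ e) :
    ∃ ω : Fin e → Fin k → Fin n,
      (∀ S : Finset (Fin n), S.card = N0 →
        ∃ i, Function.Injective (ω i) ∧ ∀ p, ω i p ∈ S) ∧ (Bset ω).card ≤ D := by
  classical
  set bad1 : Finset (Fin e → Fin k → Fin n) :=
    Finset.univ.filter (fun ω => ∃ S : Finset (Fin n), S.card = N0 ∧
      ∀ i, ¬(Function.Injective (ω i) ∧ ∀ p, ω i p ∈ S)) with hbad1
  set bad2 : Finset (Fin e → Fin k → Fin n) :=
    Finset.univ.filter (fun ω => D + 1 ≤ (Bset ω).card) with hbad2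
  have hΩ : (Finset.univ : Finset (Fin e → Fin k → Fin n)).card = (n ^ k) ^ e := by
    rw [Finset.card_univ, Fintype.card_fun, card_fun_eq, Fintype.card_fin]
  have h1 : 8 * bad1.card ≤ (n ^ k) ^ e := by
    calc 8 * bad1.card ≤ 8 * (2 ^ n * (n ^ k - N0.descFactorial k) ^ e) :=
          Nat.mul_le_mul_left _ (count_bad1 N0)
      _ = 2 ^ n * (n ^ k - N0.descFactorial k) ^ e * 8 := by ring
      _ ≤ (n ^ k) ^ e := hcount
  have h2 : 2 * bad2.card ≤ (n ^ k) ^ e := by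
    have hmarkov : bad2.card * (D + 1) ≤ ∑ ω : Fin e → Fin k → Fin n, (Bset ω).card := by
      calc bad2.card * (D + 1) = bad2.card • (D + 1) := by rw [smul_eq_mul]
        _ ≤ ∑ ω ∈ bad2, (Bset ω).card := Finset.card_nsmul_le_sum _ _ _
            (fun ω hω => (Finset.mem_filter.1 hω).2)
        _ ≤ ∑ ω : Fin e → Fin k → Fin n, (Bset ω).card :=
            Finset.sum_le_sum_of_subset (Finset.subset_univ _)
    have h3 : 2 * (bad2.card * (D + 1)) ≤ (D + 1) * (n ^ k) ^ e := by
      calc 2 * (bad2.card * (D + 1)) ≤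
          2 * (e * ((k ^ 2 * (n * n ^ (k - 2))) * (n ^ k) ^ (e - 1)) +
            e ^ 2 * ((n ^ 2 * (k ^ 2 * n ^ (k - 2)) ^ 2) * (n ^ k) ^ (e - 2)) +
            e ^ 3 * ((n ^ 3 * (k ^ 2 * n ^ (k - 2)) ^ 3) * (n ^ k) ^ (e - 3))) :=
          Nat.mul_le_mul_left _ (le_trans hmarkov sum_Bset_card_le)
        _ ≤ (D + 1) * (n ^ k) ^ e := hsum
    have hD1 : 0 < D + 1 := Nat.succ_pos D
    rw [show 2 * (bad2.card * (D + 1)) = (2 * bad2.card) * (D + 1) by ring] at h3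
    rw [show (D + 1) * (n ^ k) ^ e = ((n ^ k) ^ e) * (D + 1) by ring] at h3
    exact Nat.le_of_mul_le_mul_right h3 hD1
  have hpos : 0 < (n ^ k) ^ e := by positivity
  have hlt : (bad1 ∪ bad2).card < (Finset.univ : Finset (Fin e → Fin k → Fin n)).card := by
    rw [hΩ]
    have := Finset.card_union_le bad1 bad2
    omega
  have hne : (Finset.univ \ (bad1 ∪ bad2)).Nonempty := by
    rw [← Finset.card_pos]
    have h := Finset.le_card_sdiff (bad1 ∪ bad2) Finset.univ
    omega
  obtain ⟨ω, hω⟩ := hne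
  rw [Finset.mem_sdiff] at hω
  have hnb : ω ∉ bad1 ∪ bad2 := hω.2
  rw [Finset.mem_union] at hnb
  push_neg at hnb
  obtain ⟨hnb1, hnb2⟩ := hnb
  refine ⟨ω, ?_, ?_⟩
  · intro S hS
    by_contra hcon
    push_neg at hcon
    apply hnb1
    rw [hbad1, Finset.mem_filter]
    refine ⟨Finset.mem_univ _, S, hS, ?_⟩
    intro i
    rintro ⟨hinj, hmem⟩
    obtain ⟨p, hp⟩ := hcon i hinj
    exact hp (hmem p)
  · by_contra hcon
    apply hnb2
    rw [hbad2, Finset.mem_filter]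
    exact ⟨Finset.mem_univ _, by omega⟩

end Exists

section Graph
variable {k n e : ℕ}

def goodGraph (ω : Fin e → Fin k → Fin n) : SimpleGraph (Fin n) where
  Adj u v := u ≠ v ∧ ∃ i, i ∉ Bset ω ∧ u ∈ rng (ω i) ∧ v ∈ rng (ω i)
  symm := ⟨by rintro u v ⟨h, i, hi, hu, hv⟩; exact ⟨h.symm, i, hi, hv, hu⟩⟩
  loopless := ⟨by rintro u ⟨h, _⟩; exact h rfl⟩

lemma goodGraph_cliqueFree (ω : Fin e → Fin k → Fin n) (hk : 3 ≤ k) :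
    (goodGraph ω).CliqueFree (k + 1) := by
  intro t ht
  have hcard : t.card = k + 1 := ht.2
  have h2 : 1 < t.card := by omega
  obtain ⟨u, hu, v, hv, huv⟩ := Finset.one_lt_card.1 h2
  obtain ⟨_, i, hiB, hui, hvi⟩ := ht.1 hu hv huv
  have hall : ∀ w ∈ t, w ∈ rng (ω i) := by
    intro w hw
    by_cases hwu : w = u
    · subst hwu; exact hui
    by_cases hwv : w = v
    · subst hwv; exact hvi
    by_contra hwr
    obtain ⟨_, j, hjB, huj, hwj⟩ := ht.1 hu hw (fun h => hwu h.symm)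
    obtain ⟨_, l, hlB, hvl, hwl⟩ := ht.1 hv hw (fun h => hwv h.symm)
    have hij : i ≠ j := by rintro rfl; exact hwr hwj
    have hil : i ≠ l := by rintro rfl; exact hwr hwl
    by_cases hjl : j = l
    · subst hjl
      apply hiB
      rw [Bset, Finset.mem_filter]
      exact ⟨Finset.mem_univ _, Or.inr (Or.inl ⟨j, hij.symm, u, v, huv, hui, huj, hvi, hvl⟩)⟩
    · apply hiB
      rw [Bset, Finset.mem_filter]
      refine ⟨Finset.mem_univ _, Or.inr (Or.inr ⟨j, l, hij, hil, hjl, ?_⟩)⟩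
      exact ⟨u, w, v, (fun h => hwu h.symm), huv, (fun h => hwv h), hui, huj, hwj, hwl, hvi, hvl⟩
  have hsub : t ⊆ rng (ω i) := fun w hw => hall w hw
  have hle : t.card ≤ (rng (ω i)).card := Finset.card_le_card hsub
  have hrng : (rng (ω i)).card ≤ k := by
    calc (rng (ω i)).card ≤ (Finset.univ : Finset (Fin k)).card := Finset.card_image_le
      _ = k := by simp
  omega

lemma goodGraph_rich (ω : Fin e → Fin k → Fin n) (N0 D : ℕ) (hk0 : 0 < k)
    (hgood : ∀ S : Finset (Fin n), S.card = N0 →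
      ∃ i, Function.Injective (ω i) ∧ ∀ p, ω i p ∈ S)
    (hB : (Bset ω).card ≤ D)
    (U : Finset (Fin n)) (hU : N0 + D ≤ U.card) :
    ∃ S ⊆ U, (goodGraph ω).IsNClique k S := by
  classical
  set W := U \ (Bset ω).image (fun i => ω i ⟨0, hk0⟩) with hWdef
  have hWcard : N0 ≤ W.card := by
    have h1 : ((Bset ω).image (fun i => ω i ⟨0, hk0⟩)).card ≤ D :=
      le_trans Finset.card_image_le hB
    have h2 := Finset.le_card_sdiff ((Bset ω).image (fun i => ω i ⟨0, hk0⟩)) U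
    rw [← hWdef] at h2
    omega
  obtain ⟨S, hSW, hScard⟩ := Finset.exists_subset_card_eq hWcard
  obtain ⟨i, hinj, hmem⟩ := hgood S hScard
  have hiB : i ∉ Bset ω := by
    intro hi
    have h0 : ω i ⟨0, hk0⟩ ∈ W := hSW (hmem ⟨0, hk0⟩)
    rw [hWdef, Finset.mem_sdiff] at h0
    exact h0.2 (Finset.mem_image_of_mem _ hi)
  refine ⟨rng (ω i), ?_, ?_, ?_⟩
  · intro x hx
    obtain ⟨p, hp⟩ := mem_rng.1 hx
    have hxS : x ∈ S := hp ▸ hmem p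
    have hxW : x ∈ W := hSW hxS
    rw [hWdef, Finset.mem_sdiff] at hxW
    exact hxW.1
  · intro x hx y hy hxy
    exact ⟨hxy, i, hiB, hx, hy⟩
  · rw [rng, Finset.card_image_of_injective _ hinj]
    simp

end Graph

set_option maxHeartbeats 1000000 in
/-- For every `k ≥ 3` and every `n ≥ 2^(15k²)` divisible by `2k`, there exist `m ≥ 3n/4` and a
graph `G` on `m` vertices with no clique of size `k+1` such that every set of `⌈n/(2k)⌉`
vertices of `G` contains a clique of size `k`. -/
theorem exists_cliquefree_graph_rich_in_cliques (k n : ℕ) (hk : 3 ≤ k)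
    (hn : 2 ^ (15 * k ^ 2) ≤ n) (hdvd : 2 * k ∣ n) :
    ∃ m : ℕ, (3 * (n : ℚ)) / 4 ≤ (m : ℚ) ∧
      ∃ G : SimpleGraph (Fin m),
        G.CliqueFree (k + 1) ∧
        ∀ U : Finset (Fin m), U.card = ⌈(n : ℚ) / (2 * (k : ℚ))⌉₊ →
          ∃ S ⊆ U, G.IsNClique k S := by
  have hk0 : 0 < k := by omega
  have hk1 : 1 ≤ k := hk0
  have hktwo : k ≤ 2 ^ k := (Nat.lt_two_pow_self (n := k)).le
  have hn1 : 1 ≤ n := le_trans (Nat.one_le_two_pow) hn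
  -- numeric: 8k² ≤ n
  have h8k2 : 8 * k * k ≤ n := by
    calc 8 * k * k ≤ 8 * 2 ^ k * 2 ^ k := by
          exact Nat.mul_le_mul (Nat.mul_le_mul_left 8 hktwo) hktwo
      _ = 2 ^ (k + k + 3) := by rw [pow_add, pow_add]; ring
      _ ≤ 2 ^ (15 * k ^ 2) := Nat.pow_le_pow_right (by norm_num) (by nlinarith)
      _ ≤ n := hn
  set N := n / (2 * k) with hNdef
  set D := n / (8 * k) with hDdef
  set N0 := N - D with hN0def
  set Q := (4 * k) ^ k with hQdef
  set e := Q * (n + 3) with hedef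
  have hNval : 2 * k * N = n := Nat.mul_div_cancel' hdvd
  have hDle : 8 * k * D ≤ n := by
    rw [hDdef, mul_comm]
    exact Nat.div_mul_le_self n (8 * k)
  have hDN : D ≤ N := by
    rw [hDdef, hNdef]
    exact Nat.div_le_div_left (by omega) (by omega)
  have hNn : N ≤ n := Nat.div_le_self _ _
  have hN0N : N0 ≤ N := Nat.sub_le _ _
  have hsplit : N0 + D = N := by omega
  have h8kN : 8 * k * N = 4 * n := by
    calc 8 * k * N = 4 * (2 * k * N) := by ring
      _ = 4 * n := by rw [hNval]
  have hN0' : 3 * n ≤ 8 * k * N0 := by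
    have hc : 8 * k * N0 + 8 * k * D = 4 * n := by
      calc 8 * k * N0 + 8 * k * D = 8 * k * (N0 + D) := by ring
        _ = 8 * k * N := by rw [hsplit]
        _ = 4 * n := h8kN
    linarith [hDle]
  have hkN0 : k ≤ N0 := by
    have h1 : 8 * k * k ≤ 8 * k * N0 := by linarith
    exact Nat.le_of_mul_le_mul_left h1 (by omega)
  -- key : n ≤ 4k(N0+1-k)
  have hkey : n ≤ 4 * k * (N0 + 1 - k) := by
    set M := N0 - k with hMdef
    have hM : N0 + 1 - k = M + 1 := by omega
    have hN0M : N0 = M + k := by omega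
    rw [hM]
    rw [hN0M] at hN0'
    nlinarith [hN0', h8k2]
  have hQ2 : 2 ≤ Q := by
    calc 2 ≤ 4 * k := by omega
      _ ≤ (4 * k) ^ k := Nat.le_self_pow (by omega) _
  have hQ1 : 1 ≤ Q := by omega
  have hN0n : N0 ≤ n := le_trans hN0N hNn
  have hLBT : N0.descFactorial k ≤ n ^ k :=
    le_trans (Nat.descFactorial_le_pow _ _) (Nat.pow_le_pow_left hN0n k)
  have hQLB : n ^ k ≤ Q * N0.descFactorial k := by
    calc n ^ k ≤ (4 * k * (N0 + 1 - k)) ^ k := Nat.pow_le_pow_left hkey k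
      _ = Q * (N0 + 1 - k) ^ k := by rw [hQdef, ← mul_pow]
      _ ≤ Q * N0.descFactorial k :=
          Nat.mul_le_mul_left _ (Nat.pow_sub_le_descFactorial N0 k)
  have hcount : 2 ^ n * (n ^ k - N0.descFactorial k) ^ e * 8 ≤ (n ^ k) ^ e :=
    pow_shrink_nat (n ^ k) (N0.descFactorial k) Q n e hQ2 hLBT hQLB hedef
  -- D is big
  have hDbig : 168 * Q ^ 3 * k ^ 6 ≤ D + 1 := by
    have hmul : (168 * Q ^ 3 * k ^ 6) * (8 * k) ≤ n := by
      have h4k : 4 * k ≤ 2 ^ (k + 2) := by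
        calc 4 * k ≤ 4 * 2 ^ k := by omega
          _ = 2 ^ (k + 2) := by rw [pow_add]; ring
      calc (168 * Q ^ 3 * k ^ 6) * (8 * k) = 1344 * (4 * k) ^ (3 * k) * k ^ 7 := by
            rw [hQdef, ← pow_mul]
            ring_nf
        _ ≤ 1344 * (2 ^ (k + 2)) ^ (3 * k) * (2 ^ k) ^ 7 := by
            exact Nat.mul_le_mul (Nat.mul_le_mul_left 1344 (Nat.pow_le_pow_left h4k _))
              (Nat.pow_le_pow_left hktwo 7)
        _ ≤ 2 ^ 11 * 2 ^ ((k + 2) * (3 * k)) * 2 ^ (k * 7) := by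
            rw [← pow_mul, ← pow_mul]
            exact Nat.mul_le_mul_right _ (Nat.mul_le_mul_right _ (by norm_num))
        _ = 2 ^ (11 + (k + 2) * (3 * k) + k * 7) := by rw [← pow_add, ← pow_add]
        _ ≤ 2 ^ (15 * k ^ 2) := Nat.pow_le_pow_right (by norm_num) (by nlinarith)
        _ ≤ n := hn
    have : 168 * Q ^ 3 * k ^ 6 ≤ D := by
      rw [hDdef, Nat.le_div_iff_mul_le (by omega)]
      exact hmul
    omega
  have he4 : e ≤ 4 * Q * n := by
    calc e = Q * (n + 3) := hedef
      _ ≤ Q * (4 * n) := Nat.mul_le_mul_left _ (by omega)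
      _ = 4 * Q * n := by ring
  have he1 : 1 ≤ e := by
    rw [hedef]; exact Nat.mul_pos (by omega) (by omega)
  have hkeq : k - 2 + 2 = k := by omega
  have hnk2 : n ^ (k - 2) * n ^ 2 = n ^ k := by rw [← pow_add, hkeq]
  have he3 : 3 ≤ e := by
    rw [hedef]
    calc 3 ≤ 2 * (n + 3) := by omega
      _ ≤ Q * (n + 3) := Nat.mul_le_mul_right _ hQ2
  -- hsum
  have hsum : 2 * (e * ((k ^ 2 * (n * n ^ (k - 2))) * (n ^ k) ^ (e - 1)) +
      e ^ 2 * ((n ^ 2 * (k ^ 2 * n ^ (k - 2)) ^ 2) * (n ^ k) ^ (e - 2)) +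
      e ^ 3 * ((n ^ 3 * (k ^ 2 * n ^ (k - 2)) ^ 3) * (n ^ k) ^ (e - 3))) ≤
        (D + 1) * (n ^ k) ^ e := by
    have hpow1 : (n ^ k) ^ e = (n ^ k) ^ (e - 1) * (n ^ k) ^ 1 := by
      rw [← pow_add, Nat.sub_add_cancel (by omega : 1 ≤ e)]
    have hpow2 : (n ^ k) ^ e = (n ^ k) ^ (e - 2) * (n ^ k) ^ 2 := by
      rw [← pow_add, Nat.sub_add_cancel (by omega : 2 ≤ e)]
    have hpow3 : (n ^ k) ^ e = (n ^ k) ^ (e - 3) * (n ^ k) ^ 3 := by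
      rw [← pow_add, Nat.sub_add_cancel he3]
    have ht1 : 2 * (e * ((k ^ 2 * (n * n ^ (k - 2))) * (n ^ k) ^ (e - 1))) ≤
        (8 * Q * k ^ 2) * (n ^ k) ^ e := by
      have h2en : 2 * e * n ≤ 8 * Q * (n * n) := by
        calc 2 * e * n ≤ 2 * (4 * Q * n) * n :=
              Nat.mul_le_mul_right _ (Nat.mul_le_mul_left 2 he4)
          _ = 8 * Q * (n * n) := by ring
      calc 2 * (e * ((k ^ 2 * (n * n ^ (k - 2))) * (n ^ k) ^ (e - 1)))
          = (2 * e * n) * (k ^ 2 * (n ^ (k - 2) * (n ^ k) ^ (e - 1))) := by ring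
        _ ≤ (8 * Q * (n * n)) * (k ^ 2 * (n ^ (k - 2) * (n ^ k) ^ (e - 1))) :=
            Nat.mul_le_mul_right _ h2en
        _ = (8 * Q * k ^ 2) * ((n ^ (k - 2) * n ^ 2) * (n ^ k) ^ (e - 1)) := by ring
        _ = (8 * Q * k ^ 2) * ((n ^ k) ^ (e - 1) * (n ^ k) ^ 1) := by
            rw [hnk2]; ring
        _ = (8 * Q * k ^ 2) * (n ^ k) ^ e := by rw [← hpow1]
    have ht2 : 2 * (e ^ 2 * ((n ^ 2 * (k ^ 2 * n ^ (k - 2)) ^ 2) * (n ^ k) ^ (e - 2))) ≤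
        (32 * Q ^ 2 * k ^ 4) * (n ^ k) ^ e := by
      have h2en : 2 * e ^ 2 * n ^ 2 ≤ 32 * Q ^ 2 * (n ^ 2 * n ^ 2) := by
        have he2 : e ^ 2 ≤ (4 * Q * n) ^ 2 := Nat.pow_le_pow_left he4 2
        calc 2 * e ^ 2 * n ^ 2 ≤ 2 * (4 * Q * n) ^ 2 * n ^ 2 :=
              Nat.mul_le_mul_right _ (Nat.mul_le_mul_left 2 he2)
          _ = 32 * Q ^ 2 * (n ^ 2 * n ^ 2) := by ring
      calc 2 * (e ^ 2 * ((n ^ 2 * (k ^ 2 * n ^ (k - 2)) ^ 2) * (n ^ k) ^ (e - 2)))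
          = (2 * e ^ 2 * n ^ 2) * (k ^ 4 * ((n ^ (k - 2)) ^ 2 * (n ^ k) ^ (e - 2))) := by
            ring
        _ ≤ (32 * Q ^ 2 * (n ^ 2 * n ^ 2)) *
            (k ^ 4 * ((n ^ (k - 2)) ^ 2 * (n ^ k) ^ (e - 2))) :=
            Nat.mul_le_mul_right _ h2en
        _ = (32 * Q ^ 2 * k ^ 4) * ((n ^ (k - 2) * n ^ 2) ^ 2 * (n ^ k) ^ (e - 2)) := by
            ring
        _ = (32 * Q ^ 2 * k ^ 4) * ((n ^ k) ^ (e - 2) * (n ^ k) ^ 2) := by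
            rw [hnk2]; ring
        _ = (32 * Q ^ 2 * k ^ 4) * (n ^ k) ^ e := by rw [← hpow2]
    have ht3 : 2 * (e ^ 3 * ((n ^ 3 * (k ^ 2 * n ^ (k - 2)) ^ 3) * (n ^ k) ^ (e - 3))) ≤
        (128 * Q ^ 3 * k ^ 6) * (n ^ k) ^ e := by
      have h2en : 2 * e ^ 3 * n ^ 3 ≤ 128 * Q ^ 3 * (n ^ 3 * n ^ 3) := by
        have he3' : e ^ 3 ≤ (4 * Q * n) ^ 3 := Nat.pow_le_pow_left he4 3
        calc 2 * e ^ 3 * n ^ 3 ≤ 2 * (4 * Q * n) ^ 3 * n ^ 3 :=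
              Nat.mul_le_mul_right _ (Nat.mul_le_mul_left 2 he3')
          _ = 128 * Q ^ 3 * (n ^ 3 * n ^ 3) := by ring
      calc 2 * (e ^ 3 * ((n ^ 3 * (k ^ 2 * n ^ (k - 2)) ^ 3) * (n ^ k) ^ (e - 3)))
          = (2 * e ^ 3 * n ^ 3) * (k ^ 6 * ((n ^ (k - 2)) ^ 3 * (n ^ k) ^ (e - 3))) := by
            ring
        _ ≤ (128 * Q ^ 3 * (n ^ 3 * n ^ 3)) *
            (k ^ 6 * ((n ^ (k - 2)) ^ 3 * (n ^ k) ^ (e - 3))) :=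
            Nat.mul_le_mul_right _ h2en
        _ = (128 * Q ^ 3 * k ^ 6) * ((n ^ (k - 2) * n ^ 2) ^ 3 * (n ^ k) ^ (e - 3)) := by
            ring
        _ = (128 * Q ^ 3 * k ^ 6) * ((n ^ k) ^ (e - 3) * (n ^ k) ^ 3) := by
            rw [hnk2]; ring
        _ = (128 * Q ^ 3 * k ^ 6) * (n ^ k) ^ e := by rw [← hpow3]
    have hsumc : (8 * Q * k ^ 2) + (32 * Q ^ 2 * k ^ 4) + (128 * Q ^ 3 * k ^ 6) ≤
        168 * Q ^ 3 * k ^ 6 := by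
      have hQQ : Q ≤ Q ^ 3 := by
        calc Q = Q ^ 1 := (pow_one Q).symm
          _ ≤ Q ^ 3 := Nat.pow_le_pow_right hQ1 (by norm_num)
      have hQQ2 : Q ^ 2 ≤ Q ^ 3 := Nat.pow_le_pow_right hQ1 (by norm_num)
      have hkk2 : k ^ 2 ≤ k ^ 6 := Nat.pow_le_pow_right hk1 (by norm_num)
      have hkk4 : k ^ 4 ≤ k ^ 6 := Nat.pow_le_pow_right hk1 (by norm_num)
      have e1 : 8 * Q * k ^ 2 ≤ 8 * Q ^ 3 * k ^ 6 :=
        Nat.mul_le_mul (Nat.mul_le_mul_left 8 hQQ) hkk2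
      have e2 : 32 * Q ^ 2 * k ^ 4 ≤ 32 * Q ^ 3 * k ^ 6 :=
        Nat.mul_le_mul (Nat.mul_le_mul_left 32 hQQ2) hkk4
      linarith
    calc 2 * (e * ((k ^ 2 * (n * n ^ (k - 2))) * (n ^ k) ^ (e - 1)) +
        e ^ 2 * ((n ^ 2 * (k ^ 2 * n ^ (k - 2)) ^ 2) * (n ^ k) ^ (e - 2)) +
        e ^ 3 * ((n ^ 3 * (k ^ 2 * n ^ (k - 2)) ^ 3) * (n ^ k) ^ (e - 3)))
        = 2 * (e * ((k ^ 2 * (n * n ^ (k - 2))) * (n ^ k) ^ (e - 1))) +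
          2 * (e ^ 2 * ((n ^ 2 * (k ^ 2 * n ^ (k - 2)) ^ 2) * (n ^ k) ^ (e - 2))) +
          2 * (e ^ 3 * ((n ^ 3 * (k ^ 2 * n ^ (k - 2)) ^ 3) * (n ^ k) ^ (e - 3))) := by ring
      _ ≤ (8 * Q * k ^ 2) * (n ^ k) ^ e + (32 * Q ^ 2 * k ^ 4) * (n ^ k) ^ e +
          (128 * Q ^ 3 * k ^ 6) * (n ^ k) ^ e := by
          exact Nat.add_le_add (Nat.add_le_add ht1 ht2) ht3
      _ = ((8 * Q * k ^ 2) + (32 * Q ^ 2 * k ^ 4) + (128 * Q ^ 3 * k ^ 6)) * (n ^ k) ^ e := by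
          ring
      _ ≤ (168 * Q ^ 3 * k ^ 6) * (n ^ k) ^ e := Nat.mul_le_mul_right _ hsumc
      _ ≤ (D + 1) * (n ^ k) ^ e := Nat.mul_le_mul_right _ hDbig
  obtain ⟨ω, hgood, hB⟩ := exists_good_omega k n e N0 D (by omega) hcount hsum
  refine ⟨n, ?_, goodGraph ω, goodGraph_cliqueFree ω hk, ?_⟩
  · have h0 : (0:ℚ) ≤ (n:ℚ) := Nat.cast_nonneg n
    linarith
  · intro U hU
    have hNceil : ⌈(n : ℚ) / (2 * (k : ℚ))⌉₊ = N := by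
      have hq : ((n:ℚ)) = 2 * (k:ℚ) * (N:ℚ) := by exact_mod_cast hNval.symm
      have hk0' : (2 * (k:ℚ)) ≠ 0 := by
        have : (0:ℚ) < (k:ℚ) := by exact_mod_cast hk0
        positivity
      have hcancel : (2 * (k:ℚ) * (N:ℚ)) / (2 * (k:ℚ)) = (N:ℚ) :=
        mul_div_cancel_left₀ _ hk0'
      rw [hq, hcancel]
      exact Nat.ceil_natCast N
    rw [hNceil] at hU
    apply goodGraph_rich ω N0 D hk0 hgood hB U
    omega
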